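/- Let S̃_u and C be symmetric positive definite matrices of size n and m, A an n×n symmetric positive semidefinite matrix, B an n×m real matrix. Define M_a⁻¹ = [[I,0],[C⁻¹Bᵀ,I]]·[[S̃_u⁻¹,0],[0,C⁻¹]]·[[I,-BC⁻¹],[0,I]] and 𝒜 = [[A,B],[Bᵀ,0]]. Then M_a⁻¹𝒜 is similar to the symmetric matrix [[S̃_u^{-1/2} A S̃_u^{-1/2}, S̃_u^{-1/2}BC^{-1/2}],[C^{-1/2}BᵀS̃_u^{-1/2}, 0]], and hence all eigenvalues of M_a⁻¹𝒜 are real. -/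

import Mathlib

open Matrix
open scoped ComplexOrder
noncomputable def posSemidefSqrtOld {n : Type*} [Fintype n] [DecidableEq n]
    {M : Matrix n n ℝ} (hA : M.PosSemidef) : Matrix n n ℝ :=
  hA.1.eigenvectorUnitary.1 * diagonal ((↑) ∘ (√·) ∘ hA.1.eigenvalues) *
    (star hA.1.eigenvectorUnitary : Matrix n n ℝ)

theorem posSemidefSqrtOld_mul_self {n : Type*} [Fintype n] [DecidableEq n]
    {M : Matrix n n ℝ} (hA : M.PosSemidef) : posSemidefSqrtOld hA * posSemidefSqrtOld hA = M := by
  have hU : (star hA.1.eigenvectorUnitary : Matrix n n ℝ) * hA.1.eigenvectorUnitary.1 = 1 :=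
    Unitary.star_mul_self_of_mem hA.1.eigenvectorUnitary.2
  conv_rhs => rw [hA.1.spectral_theorem]
  simp only [posSemidefSqrtOld, Unitary.conjStarAlgAut_apply]
  have hd : diagonal ((↑) ∘ (√·) ∘ hA.1.eigenvalues) * diagonal ((↑) ∘ (√·) ∘ hA.1.eigenvalues)
      = (diagonal (RCLike.ofReal ∘ hA.1.eigenvalues) : Matrix n n ℝ) := by
    rw [diagonal_mul_diagonal]; congr 1; funext i
    simp [Real.mul_self_sqrt (hA.eigenvalues_nonneg i)]
  calc _ = (hA.1.eigenvectorUnitary.1 * (diagonal ((↑) ∘ (√·) ∘ hA.1.eigenvalues) *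
      ((star hA.1.eigenvectorUnitary : Matrix n n ℝ) * hA.1.eigenvectorUnitary.1) *
      diagonal ((↑) ∘ (√·) ∘ hA.1.eigenvalues))) * (star hA.1.eigenvectorUnitary : Matrix n n ℝ) := by
        simp only [Matrix.mul_assoc]
    _ = _ := by rw [hU, Matrix.mul_one, hd]

theorem posSemidefSqrtOld_transpose {n : Type*} [Fintype n] [DecidableEq n]
    {M : Matrix n n ℝ} (hA : M.PosSemidef) : (posSemidefSqrtOld hA)ᵀ = posSemidefSqrtOld hA := by
  have h : ∀ X : Matrix n n ℝ, Xᵀ = Xᴴ := fun X => (conjTranspose_eq_transpose_of_trivial X).symm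
  rw [h]
  simp only [posSemidefSqrtOld, conjTranspose_mul, diagonal_conjTranspose, Matrix.mul_assoc]
  simp [Matrix.star_eq_conjTranspose, Matrix.mul_assoc]


/-- The alternative RACP preconditioned matrix `M_a⁻¹𝒜` is similar to a symmetric
matrix, hence has real spectrum. -/
theorem racp_alternative_preconditioned_similar_symmetric
    (n m : ℕ)
    (A : Matrix (Fin n) (Fin n) ℝ) (hA : A.PosSemidef)
    (B : Matrix (Fin n) (Fin m) ℝ)
    (C : Matrix (Fin m) (Fin m) ℝ) (hC : C.PosDef)
    (Stilde : Matrix (Fin n) (Fin n) ℝ) (hStilde : Stilde.PosDef)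
    (StHalfInv : Matrix (Fin n) (Fin n) ℝ)
    (hStHalfInv : StHalfInv = (posSemidefSqrtOld hStilde.posSemidef)⁻¹)
    (CHalfInv : Matrix (Fin m) (Fin m) ℝ)
    (hCHalfInv : CHalfInv = (posSemidefSqrtOld hC.posSemidef)⁻¹)
    (Mainv : Matrix (Fin n ⊕ Fin m) (Fin n ⊕ Fin m) ℝ)
    (hMainv : Mainv =
      Matrix.fromBlocks 1 0 (C⁻¹ * Bᵀ) 1 *
      Matrix.fromBlocks Stilde⁻¹ 0 0 C⁻¹ *
      Matrix.fromBlocks 1 (-(B * C⁻¹)) 0 1)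
    (𝒜 : Matrix (Fin n ⊕ Fin m) (Fin n ⊕ Fin m) ℝ)
    (h𝒜 : 𝒜 = Matrix.fromBlocks A B Bᵀ 0)
    (K : Matrix (Fin n ⊕ Fin m) (Fin n ⊕ Fin m) ℝ)
    (hK : K = Matrix.fromBlocks
      (StHalfInv * A * StHalfInv) (StHalfInv * B * CHalfInv)
      (CHalfInv * Bᵀ * StHalfInv) 0) :
    (∃ T : Matrix (Fin n ⊕ Fin m) (Fin n ⊕ Fin m) ℝ, IsUnit T ∧
      T⁻¹ * (Mainv * 𝒜) * T = K) ∧ K.IsHermitian ∧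
    (∀ lam : ℂ, (∃ z : Fin n ⊕ Fin m → ℂ, z ≠ 0 ∧
        ((Mainv * 𝒜).map Complex.ofReal) *ᵥ z = lam • z) → lam.im = 0) := by
  classical
  set P := posSemidefSqrtOld hStilde.posSemidef with hP
  set Q := posSemidefSqrtOld hC.posSemidef with hQ
  have hPP : P * P = Stilde := posSemidefSqrtOld_mul_self hStilde.posSemidef
  have hQQ : Q * Q = C := posSemidefSqrtOld_mul_self hC.posSemidef
  have hPu : IsUnit P := by
    rw [Matrix.isUnit_iff_isUnit_det]
    have : IsUnit (P.det * P.det) := by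
      rw [← Matrix.det_mul, hPP, ← Matrix.isUnit_iff_isUnit_det]; exact hStilde.isUnit
    exact isUnit_of_mul_isUnit_left this
  have hQu : IsUnit Q := by
    rw [Matrix.isUnit_iff_isUnit_det]
    have : IsUnit (Q.det * Q.det) := by
      rw [← Matrix.det_mul, hQQ, ← Matrix.isUnit_iff_isUnit_det]; exact hC.isUnit
    exact isUnit_of_mul_isUnit_left this
  have hPi : P * StHalfInv = 1 := by rw [hStHalfInv]; exact Matrix.mul_nonsing_inv _ ((Matrix.isUnit_iff_isUnit_det _).mp hPu)
  have hiP : StHalfInv * P = 1 := by rw [hStHalfInv]; exact Matrix.nonsing_inv_mul _ ((Matrix.isUnit_iff_isUnit_det _).mp hPu)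
  have hQi : Q * CHalfInv = 1 := by rw [hCHalfInv]; exact Matrix.mul_nonsing_inv _ ((Matrix.isUnit_iff_isUnit_det _).mp hQu)
  have hiQ : CHalfInv * Q = 1 := by rw [hCHalfInv]; exact Matrix.nonsing_inv_mul _ ((Matrix.isUnit_iff_isUnit_det _).mp hQu)
  have hSinv : Stilde⁻¹ = StHalfInv * StHalfInv := by
    rw [← hPP, Matrix.mul_inv_rev, hStHalfInv]
  have hCinv : C⁻¹ = CHalfInv * CHalfInv := by
    rw [← hQQ, Matrix.mul_inv_rev, hCHalfInv]
  -- block factors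
  set L : Matrix (Fin n ⊕ Fin m) (Fin n ⊕ Fin m) ℝ := Matrix.fromBlocks 1 0 (C⁻¹ * Bᵀ) 1 with hL
  set L' : Matrix (Fin n ⊕ Fin m) (Fin n ⊕ Fin m) ℝ := Matrix.fromBlocks 1 0 (-(C⁻¹ * Bᵀ)) 1 with hL'
  set U : Matrix (Fin n ⊕ Fin m) (Fin n ⊕ Fin m) ℝ := Matrix.fromBlocks 1 (-(B * C⁻¹)) 0 1 with hU
  set D : Matrix (Fin n ⊕ Fin m) (Fin n ⊕ Fin m) ℝ := Matrix.fromBlocks Stilde⁻¹ 0 0 C⁻¹ with hD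
  set H : Matrix (Fin n ⊕ Fin m) (Fin n ⊕ Fin m) ℝ := Matrix.fromBlocks StHalfInv 0 0 CHalfInv with hH
  set H' : Matrix (Fin n ⊕ Fin m) (Fin n ⊕ Fin m) ℝ := Matrix.fromBlocks P 0 0 Q with hH'
  have hLL' : L * L' = 1 := by
    simp [hL, hL', Matrix.fromBlocks_multiply, ← Matrix.fromBlocks_one]
  have hL'L : L' * L = 1 := by
    simp [hL, hL', Matrix.fromBlocks_multiply, ← Matrix.fromBlocks_one]
  have hHH' : H * H' = 1 := by
    simp [hH, hH', Matrix.fromBlocks_multiply, hiP, hiQ, ← Matrix.fromBlocks_one]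
  have hH'H : H' * H = 1 := by
    simp [hH, hH', Matrix.fromBlocks_multiply, hPi, hQi, ← Matrix.fromBlocks_one]
  -- key structural identities
  have hUAL : U * 𝒜 * L = 𝒜 := by
    subst h𝒜
    simp [hU, hL, Matrix.fromBlocks_multiply, Matrix.mul_assoc, Matrix.neg_mul, Matrix.mul_neg]
  have hDH : D = H * H := by
    simp [hD, hH, Matrix.fromBlocks_multiply, hSinv, hCinv]
  have hKH : K = H * 𝒜 * H := by
    subst h𝒜 hK
    simp [hH, Matrix.fromBlocks_multiply, Matrix.mul_assoc]
  -- the similarity transform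
  set T : Matrix (Fin n ⊕ Fin m) (Fin n ⊕ Fin m) ℝ := L * H with hT
  set T' : Matrix (Fin n ⊕ Fin m) (Fin n ⊕ Fin m) ℝ := H' * L' with hT'
  have hTT' : T * T' = 1 := by
    rw [hT, hT', Matrix.mul_assoc, ← Matrix.mul_assoc H, hHH', Matrix.one_mul, hLL']
  have hT'T : T' * T = 1 := by
    rw [hT, hT', Matrix.mul_assoc, ← Matrix.mul_assoc L', hL'L, Matrix.one_mul, hH'H]
  have hTu : IsUnit T := ⟨⟨T, T', hTT', hT'T⟩, rfl⟩
  have hTinv : T⁻¹ = T' := Matrix.inv_eq_right_inv hTT'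
  have hUA : U * 𝒜 = 𝒜 * L' := by
    calc U * 𝒜 = U * 𝒜 * (L * L') := by rw [hLL', Matrix.mul_one]
      _ = (U * 𝒜 * L) * L' := by rw [Matrix.mul_assoc (U * 𝒜)]
      _ = 𝒜 * L' := by rw [hUAL]
  have hMA : Mainv * 𝒜 = T * K * T' := by
    rw [hMainv, hKH, hT, hT']
    have h1 : H * (H' * L') = L' := by rw [← Matrix.mul_assoc, hHH', Matrix.one_mul]
    rw [Matrix.mul_assoc (L * D) U 𝒜, hUA, hDH]
    simp only [Matrix.mul_assoc, h1]
  have hsim : T⁻¹ * (Mainv * 𝒜) * T = K := by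
    rw [hTinv, hMA]
    calc T' * (T * K * T') * T = T' * T * K * (T' * T) := by
          simp only [Matrix.mul_assoc]
      _ = K := by rw [hT'T, Matrix.one_mul, Matrix.mul_one]
  -- symmetry of the blocks
  have hPh : Pᵀ = P := posSemidefSqrtOld_transpose hStilde.posSemidef
  have hQh : Qᵀ = Q := posSemidefSqrtOld_transpose hC.posSemidef
  have hSh : StHalfInvᵀ = StHalfInv := by
    rw [hStHalfInv, Matrix.transpose_nonsing_inv, hPh]
  have hCh : CHalfInvᵀ = CHalfInv := by
    rw [hCHalfInv, Matrix.transpose_nonsing_inv, hQh]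
  have hKherm : K.IsHermitian := by
    rw [hK]
    show _ᴴ = _
    rw [show (Matrix.fromBlocks (StHalfInv * A * StHalfInv) (StHalfInv * B * CHalfInv)
      (CHalfInv * Bᵀ * StHalfInv) (0 : Matrix (Fin m) (Fin m) ℝ))ᴴ
      = (Matrix.fromBlocks (StHalfInv * A * StHalfInv) (StHalfInv * B * CHalfInv)
      (CHalfInv * Bᵀ * StHalfInv) 0)ᵀ from rfl]
    rw [Matrix.fromBlocks_transpose]
    have hAt : Aᵀ = A := by
      rw [← Matrix.conjTranspose_eq_transpose_of_trivial]; exact hA.isHermitian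
    simp [Matrix.transpose_mul, hSh, hCh, hAt, Matrix.mul_assoc]
  refine ⟨⟨T, hTu, hsim⟩, hKherm, ?_⟩
  -- real spectrum
  rintro lam ⟨z, hz, hzz⟩
  set f := Complex.ofRealHom
  have hmapmul : ∀ (X Y : Matrix (Fin n ⊕ Fin m) (Fin n ⊕ Fin m) ℝ),
      (X * Y).map f = X.map f * Y.map f := fun X Y => Matrix.map_mul
  set M : Matrix (Fin n ⊕ Fin m) (Fin n ⊕ Fin m) ℂ := K.map f with hM
  have hKs : ∀ i j, K j i = K i j := by
    intro i j
    conv_rhs => rw [← hKherm.eq]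
    simp [Matrix.conjTranspose_apply]
  have hMherm : M.IsHermitian := by
    show Mᴴ = M
    rw [hM]
    ext i j
    simp only [Matrix.conjTranspose_apply, Matrix.map_apply]
    rw [hKs i j]
    exact Complex.conj_ofReal _
  set w : (Fin n ⊕ Fin m) → ℂ := (T'.map f) *ᵥ z with hw
  have hwz : (T.map f) *ᵥ w = z := by
    rw [hw, Matrix.mulVec_mulVec, ← hmapmul, hTT']
    simp
  have hwne : w ≠ 0 := by
    intro h
    apply hz
    rw [← hwz, h, Matrix.mulVec_zero]
  have ht't : T'.map f * T.map f = 1 := by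
    rw [← hmapmul, hT'T, Matrix.map_one f (map_zero f) (map_one f)]
  have heig : M *ᵥ w = lam • w := by
    have hX : (Mainv * 𝒜).map f = T.map f * M * T'.map f := by
      rw [hMA, hmapmul, hmapmul]
    have h3 : M * T'.map f = T'.map f * ((Mainv * 𝒜).map f) := by
      rw [hX]
      simp only [← Matrix.mul_assoc]
      rw [ht't, Matrix.one_mul]
    have hzz' : (Mainv * 𝒜).map ⇑f *ᵥ z = lam • z := hzz
    rw [hw, Matrix.mulVec_mulVec, h3, ← Matrix.mulVec_mulVec, hzz', Matrix.mulVec_smul]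
  -- standard hermitian eigenvalue argument
  clear_value M w
  have key : lam * (star w ⬝ᵥ w) = (starRingEnd ℂ) lam * (star w ⬝ᵥ w) := by
    have h1 : star w ⬝ᵥ (M *ᵥ w) = lam * (star w ⬝ᵥ w) := by
      rw [heig, dotProduct_smul]; simp [smul_eq_mul]
    have h2 : star w ⬝ᵥ (M *ᵥ w) = (starRingEnd ℂ) lam * (star w ⬝ᵥ w) := by
      have hvm : star w ᵥ* M = star (M *ᵥ w) := by
        rw [Matrix.star_mulVec, hMherm.eq]
        
      rw [Matrix.dotProduct_mulVec, hvm, heig, star_smul, smul_dotProduct,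
        smul_eq_mul, starRingEnd_apply]
    rw [← h1, h2]
  have hc : (star w ⬝ᵥ w) ≠ 0 := fun h => hwne (dotProduct_star_self_eq_zero.mp h)
  have : lam = (starRingEnd ℂ) lam := mul_right_cancel₀ hc key
  have := Complex.conj_eq_iff_im.mp this.symm
  exact this
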